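/- Let V be a vector space over a field. Every linear map f : V → V is semi-balanced (as a function on the underlying set of V) if and only if V is finite-dimensional. -/

import Mathlib

/-- `T` is a transversal of the equivalence relation `ker f = {(x,y) : f x = f y}`:
it contains exactly one element of each `ker f`-class. -/
def IsTransversal {X : Type*} (f : X → X) (T : Set X) : Prop :=
  ∀ x : X, ∃! t, t ∈ T ∧ f t = f x

/-- `f` is semi-balanced if its collapse `c(f) = |X \ T|` (for a transversal `T` of `ker f`)
equals its defect `d(f) = |X \ f(X)|`. -/
def SemiBalanced {X : Type*} (f : X → X) : Prop :=
  ∃ T : Set X, IsTransversal f T ∧ Cardinal.mk ↥(Tᶜ) = Cardinal.mk ↥((Set.range f)ᶜ)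

open Submodule Module in
lemma semiBalanced_of_finiteDimensional {K V : Type*} [Field K] [AddCommGroup V] [Module K V]
    [FiniteDimensional K V] (f : V →ₗ[K] V) : SemiBalanced (f : V → V) := by
  obtain ⟨W, hW⟩ := Submodule.exists_isCompl (LinearMap.ker f)
  refine ⟨(W : Set V), ?_, ?_⟩
  · -- W is a transversal
    intro x
    have hx : x ∈ LinearMap.ker f ⊔ W := by rw [hW.sup_eq_top]; trivial
    obtain ⟨y, hy, z, hz, hyz⟩ := Submodule.mem_sup.1 hx
    refine ⟨z, ⟨hz, ?_⟩, ?_⟩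
    · have : f x = f y + f z := by rw [← hyz]; exact f.map_add y z
      rw [this, LinearMap.mem_ker.1 hy, zero_add]
    · rintro t ⟨htW, hft⟩
      have hker : t - z ∈ LinearMap.ker f := by
        rw [LinearMap.mem_ker, f.map_sub, hft, sub_eq_zero]
        have : f x = f y + f z := by rw [← hyz]; exact f.map_add y z
        rw [this, LinearMap.mem_ker.1 hy, zero_add]
      have hWmem : t - z ∈ W := W.sub_mem htW hz
      have : t - z ∈ LinearMap.ker f ⊓ W := ⟨hker, hWmem⟩
      rw [hW.inf_eq_bot] at this
      have := Submodule.mem_bot (R := K) |>.1 this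
      exact sub_eq_zero.1 this
  · -- cardinality equality via an automorphism mapping W onto range f
    obtain ⟨W', hW'⟩ := Submodule.exists_isCompl W
    obtain ⟨R', hR'⟩ := Submodule.exists_isCompl (LinearMap.range f)
    have h1 : finrank K (LinearMap.ker f) + finrank K W = finrank K V :=
      Submodule.finrank_add_eq_of_isCompl hW
    have h2 : finrank K W + finrank K W' = finrank K V :=
      Submodule.finrank_add_eq_of_isCompl hW'
    have h3 : finrank K (LinearMap.range f) + finrank K R' = finrank K V :=
      Submodule.finrank_add_eq_of_isCompl hR'
    have h4 : finrank K (LinearMap.range f) + finrank K (LinearMap.ker f) = finrank K V :=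
      LinearMap.finrank_range_add_finrank_ker f
    obtain ⟨e1⟩ : Nonempty (W ≃ₗ[K] LinearMap.range f) :=
      FiniteDimensional.nonempty_linearEquiv_of_finrank_eq (by omega)
    obtain ⟨e2⟩ : Nonempty (W' ≃ₗ[K] R') :=
      FiniteDimensional.nonempty_linearEquiv_of_finrank_eq (by omega)
    set g : V ≃ₗ[K] V :=
      (Submodule.prodEquivOfIsCompl W W' hW').symm.trans
        ((e1.prodCongr e2).trans (Submodule.prodEquivOfIsCompl (LinearMap.range f) R' hR'))
    have hmem : ∀ x : V, x ∈ W ↔ g x ∈ LinearMap.range f := by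
      intro x
      set p := (Submodule.prodEquivOfIsCompl W W' hW').symm x with hp
      have hgx : g x = (e1 p.1 : V) + (e2 p.2 : V) := rfl
      constructor
      · intro hx
        have : p.2 = 0 := (Submodule.prodEquivOfIsCompl_symm_apply_snd_eq_zero W W' hW').2 hx
        rw [hgx, this, map_zero]
        exact (LinearMap.range f).add_mem (e1 p.1).2 (Submodule.zero_mem _)
      · intro hgxR
        have hv : (e2 p.2 : V) ∈ LinearMap.range f := by
          have : (e2 p.2 : V) = g x - (e1 p.1 : V) := by rw [hgx]; abel
          rw [this]
          exact Submodule.sub_mem _ hgxR (e1 p.1).2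
        have : (e2 p.2 : V) ∈ LinearMap.range f ⊓ R' := ⟨hv, (e2 p.2).2⟩
        rw [hR'.inf_eq_bot] at this
        have h0 : e2 p.2 = 0 := Subtype.ext (Submodule.mem_bot (R := K) |>.1 this)
        have : p.2 = 0 := e2.injective (by rw [h0, map_zero])
        exact (Submodule.prodEquivOfIsCompl_symm_apply_snd_eq_zero W W' hW').1 this
    have himg : (g : V → V) '' (W : Set V) = (LinearMap.range f : Set V) := by
      ext y
      constructor
      · rintro ⟨x, hx, rfl⟩; exact (hmem x).1 hx
      · intro hy
        refine ⟨g.symm y, ?_, g.apply_symm_apply y⟩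
        have : g (g.symm y) ∈ LinearMap.range f := by rwa [g.apply_symm_apply]
        exact (hmem (g.symm y)).2 this
    have hbij : Function.Bijective (g : V → V) := g.bijective
    calc Cardinal.mk ↥((W : Set V)ᶜ)
        = Cardinal.mk ↥((g : V → V) '' (W : Set V)ᶜ) := (Cardinal.mk_image_eq g.injective).symm
      _ = Cardinal.mk ↥(((g : V → V) '' (W : Set V))ᶜ) := by rw [Set.image_compl_eq hbij]
      _ = Cardinal.mk ↥((Set.range (f : V → V))ᶜ) := by
          rw [himg, LinearMap.coe_range]

theorem stmt18 {K V : Type*} [Field K] [AddCommGroup V] [Module K V] :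
    (∀ f : V →ₗ[K] V, SemiBalanced (f : V → V)) ↔ FiniteDimensional K V := by
  constructor
  · intro h
    by_contra hfd
    set b := Module.Basis.ofVectorSpace K V
    set ι := Module.Basis.ofVectorSpaceIndex K V
    have hι : Infinite ι := by
      rw [← not_finite_iff_infinite]
      intro hfin
      exact hfd (Module.Finite.of_basis b)
    -- get an injective non-surjective self-map of ι
    obtain ⟨e⟩ : Nonempty (Option ι ≃ ι) := by
      rw [← Cardinal.eq, Cardinal.mk_option, Cardinal.add_one_eq (Cardinal.aleph0_le_mk ι)]
    set g0 : ι → ι := fun i => e (some i) with hg0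
    have hg0inj : Function.Injective g0 := fun a b hab => by
      simpa using e.injective hab
    have hi0 : e none ∉ Set.range g0 := by
      rintro ⟨i, hi⟩
      exact Option.some_ne_none _ (e.injective hi)
    set f : V →ₗ[K] V :=
      (b.repr.symm.toLinearMap) ∘ₗ (Finsupp.lmapDomain K K g0) ∘ₗ b.repr.toLinearMap with hf
    have hfx : ∀ x : V, f x = b.repr.symm (Finsupp.mapDomain g0 (b.repr x)) := fun x => rfl
    have hinj : Function.Injective (f : V → V) := by
      intro x y hxy
      rw [hfx, hfx] at hxy
      have := Finsupp.mapDomain_injective hg0inj (b.repr.symm.injective hxy)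
      exact b.repr.injective this
    have hnr : b (e none) ∉ Set.range (f : V → V) := by
      rintro ⟨x, hx⟩
      rw [hfx] at hx
      have : Finsupp.mapDomain g0 (b.repr x) = b.repr (b (e none)) := by
        have := congrArg b.repr hx
        rwa [b.repr.apply_symm_apply] at this
      rw [Module.Basis.repr_self] at this
      have h0 := DFunLike.congr_fun this (e none)
      rw [Finsupp.mapDomain_notin_range _ _ hi0] at h0
      simp at h0
    obtain ⟨T, hT, hcard⟩ := h f
    have hTuniv : T = Set.univ := by
      ext x
      simp only [Set.mem_univ, iff_true]
      obtain ⟨t, ⟨htT, hft⟩, -⟩ := hT x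
      rwa [hinj hft] at htT
    rw [hTuniv, Set.compl_univ, Cardinal.mk_emptyCollection] at hcard
    have : IsEmpty ↥((Set.range (f : V → V))ᶜ) := Cardinal.mk_eq_zero_iff.1 hcard.symm
    exact this.elim ⟨b (e none), hnr⟩
  · intro _ f
    exact semiBalanced_of_finiteDimensional f
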